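/- Let d ≥ 1, let K be a nonempty closed convex subset of ℝ^d with closedBall(0,1) ⊆ K ⊆ closedBall(0,R) for some R > 1, and let η > 0 and τ ≥ 0. Then ∫_{ℝ^d} exp(−(infDist(y,K) − τ)²/(2η)) dy ≤ vol(K) · [exp(η d²/2 + τ d) · √(2π η d²) + exp(−τ²/(2η))]. -/

import Mathlib

open MeasureTheory Metric Set Pointwise

lemma mem_cthick_iff {X : Type*} [PseudoMetricSpace X] {s : Set X} (hs : s.Nonempty) {δ : ℝ}
    (hδ : 0 ≤ δ) (x : X) : x ∈ cthickening δ s ↔ infDist x s ≤ δ := by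
  rw [mem_cthickening_iff]
  constructor
  · intro h
    have := ENNReal.toReal_mono ENNReal.ofReal_ne_top h
    rwa [ENNReal.toReal_ofReal hδ] at this
  · intro h
    have h1 : _ ≠ ⊤ := infEdist_ne_top (x := x) hs
    rw [← ENNReal.ofReal_toReal h1]
    exact ENNReal.ofReal_le_ofReal h

lemma cthick_subset_smul {d : ℕ} {C : Set (EuclideanSpace ℝ (Fin d))} (hconv : Convex ℝ C)
    (hcl : IsClosed C) (hne : C.Nonempty) {ρ t : ℝ} (hρ : 0 < ρ)
    (hball : closedBall 0 ρ ⊆ C) (ht : 0 ≤ t) :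
    cthickening t C ⊆ (1 + t / ρ) • C := by
  intro y hy
  have hyd : infDist y C ≤ t := (mem_cthick_iff hne ht y).1 hy
  obtain ⟨x, hxC, hxd⟩ := hcl.exists_infDist_eq_dist hne y
  have hdist : dist y x ≤ t := by rw [← hxd]; exact hyd
  have hmem : y - x ∈ (t / ρ) • C := by
    rcases eq_or_lt_of_le ht with h0 | h0
    · have : y = x := by
        have : dist y x ≤ 0 := by rw [← h0] at hdist; exact hdist
        have := le_antisymm this dist_nonneg
        exact dist_eq_zero.mp this
      rw [this, sub_self, ← h0]
      refine ⟨0, hball (mem_closedBall_self hρ.le), by simp⟩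
    · have h1 : ‖y - x‖ ≤ t := by rwa [dist_eq_norm] at hdist
      have key : y - x = (t / ρ) • ((ρ / t) • (y - x)) := by
        rw [smul_smul]
        have : t / ρ * (ρ / t) = 1 := by field_simp
        rw [this, one_smul]
      rw [key]
      refine smul_mem_smul_set (hball ?_)
      rw [mem_closedBall_zero_iff, norm_smul, Real.norm_eq_abs, abs_of_nonneg (by positivity)]
      calc ρ / t * ‖y - x‖ ≤ ρ / t * t := by
            apply mul_le_mul_of_nonneg_left h1 (by positivity)
        _ = ρ := by field_simp
  have hsplit : (1 + t / ρ) • C = (1:ℝ) • C + (t / ρ) • C :=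
    hconv.add_smul zero_le_one (by positivity)
  rw [hsplit, one_smul]
  exact ⟨x, hxC, y - x, hmem, by module⟩

lemma ball_subset_cthick {d : ℕ} {C : Set (EuclideanSpace ℝ (Fin d))}
    (hball : closedBall 0 1 ⊆ C) {a : ℝ} (ha : 0 ≤ a) :
    closedBall (0 : EuclideanSpace ℝ (Fin d)) (1 + a) ⊆ cthickening a C := by
  intro w hw
  rw [mem_closedBall_zero_iff] at hw
  by_cases h1 : ‖w‖ ≤ 1
  · exact self_subset_cthickening _ (hball (mem_closedBall_zero_iff.2 h1))
  · push_neg at h1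
    have hw0 : 0 < ‖w‖ := by linarith
    set u := ‖w‖⁻¹ • w with hu
    have huC : u ∈ C := by
      apply hball
      rw [mem_closedBall_zero_iff, hu, norm_smul, Real.norm_eq_abs,
        abs_of_nonneg (by positivity)]
      rw [inv_mul_cancel₀ hw0.ne']
    apply mem_cthickening_of_dist_le w u a C huC
    rw [dist_eq_norm]
    have key : w - u = (1 - ‖w‖⁻¹) • w := by rw [sub_smul, one_smul, hu]
    rw [key, norm_smul, Real.norm_eq_abs, abs_of_nonneg (by
      rw [sub_nonneg]; exact inv_le_one_of_one_le₀ h1.le)]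
    have : (1 - ‖w‖⁻¹) * ‖w‖ = ‖w‖ - 1 := by field_simp
    rw [this]; linarith

lemma cthick_step {d : ℕ} {K : Set (EuclideanSpace ℝ (Fin d))} (hKcl : IsClosed K)
    (hKne : K.Nonempty) {a b : ℝ} (ha : 0 ≤ a) (hab : a ≤ b) :
    cthickening b K ⊆ cthickening (b - a) (cthickening a K) := by
  intro y hy
  have hyd : infDist y K ≤ b := (mem_cthick_iff hKne (ha.trans hab) y).1 hy
  obtain ⟨x, hxK, hxd⟩ := hKcl.exists_infDist_eq_dist hKne y
  have hdyx : dist y x ≤ b := hxd ▸ hyd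
  rw [mem_cthick_iff (hKne.mono (self_subset_cthickening _)) (by linarith) y]
  by_cases hc : dist y x ≤ a
  · have : y ∈ cthickening a K := mem_cthickening_of_dist_le y x a K hxK hc
    rw [infDist_zero_of_mem this]; linarith
  · push_neg at hc
    have hD : 0 < dist y x := lt_of_le_of_lt ha hc
    set z := x + (a / dist y x) • (y - x) with hz
    have hzK : z ∈ cthickening a K := by
      apply mem_cthickening_of_dist_le z x a K hxK
      rw [dist_eq_norm, hz]
      have : x + (a / dist y x) • (y - x) - x = (a / dist y x) • (y - x) := by abel
      rw [this, norm_smul, Real.norm_eq_abs, abs_of_nonneg (by positivity)]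
      rw [← dist_eq_norm] at *
      rw [div_mul_cancel₀ _ hD.ne']
    calc infDist y (cthickening a K) ≤ dist y z := infDist_le_dist_of_mem hzK
      _ = dist y x - a := by
          rw [dist_eq_norm, hz]
          have : y - (x + (a / dist y x) • (y - x)) = (1 - a / dist y x) • (y - x) := by
            rw [sub_smul, one_smul]; abel
          rw [this, norm_smul, Real.norm_eq_abs,
            abs_of_nonneg (by rw [sub_nonneg]; exact div_le_one_of_le₀ hc.le dist_nonneg),
            ← dist_eq_norm]
          field_simp
      _ ≤ b - a := by linarith

variable {d : ℕ} {K : Set (EuclideanSpace ℝ (Fin d))}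

lemma vol_smul (r : ℝ) (hr : 0 ≤ r) (s : Set (EuclideanSpace ℝ (Fin d))) :
    volume (r • s) = ENNReal.ofReal (r ^ d) * volume s := by
  rw [Measure.addHaar_smul, finrank_euclideanSpace_fin, abs_of_nonneg (by positivity)]

lemma vol_cthick_ratio (hKcl : IsClosed K) (hKne : K.Nonempty) (hKconv : Convex ℝ K)
    (hK1 : closedBall (0 : EuclideanSpace ℝ (Fin d)) 1 ⊆ K)
    {a b : ℝ} (ha : 0 ≤ a) (hab : a ≤ b) :
    volume (cthickening b K) ≤
      ENNReal.ofReal (((1 + b) / (1 + a)) ^ d) * volume (cthickening a K) := by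
  have h1a : (0:ℝ) < 1 + a := by linarith
  have hsub : cthickening b K ⊆ ((1 + b) / (1 + a)) • cthickening a K := by
    refine (cthick_step hKcl hKne ha hab).trans ?_
    have := cthick_subset_smul (hKconv.cthickening a) (isClosed_cthickening)
      (hKne.mono (self_subset_cthickening _)) h1a (ball_subset_cthick hK1 ha)
      (t := b - a) (by linarith)
    have heq : 1 + (b - a) / (1 + a) = (1 + b) / (1 + a) := by field_simp; ring
    rwa [heq] at this
  calc volume (cthickening b K) ≤ volume (((1 + b) / (1 + a)) • cthickening a K) :=
        measure_mono hsub
    _ = _ := vol_smul _ (div_nonneg (by linarith) h1a.le) _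


lemma vol_cthick_le (hKcl : IsClosed K) (hKne : K.Nonempty) (hKconv : Convex ℝ K)
    (hK1 : closedBall (0 : EuclideanSpace ℝ (Fin d)) 1 ⊆ K)
    {a : ℝ} (ha : 0 ≤ a) :
    volume (cthickening a K) ≤ ENNReal.ofReal ((1 + a) ^ d) * volume K := by
  have := vol_cthick_ratio hKcl hKne hKconv hK1 (le_refl 0) ha
  rwa [cthickening_zero, hKcl.closure_eq, add_zero, div_one] at this

lemma vol_annulus (hKcl : IsClosed K) (hKne : K.Nonempty) (hKconv : Convex ℝ K)
    (hK1 : closedBall (0 : EuclideanSpace ℝ (Fin d)) 1 ⊆ K)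
    (hKfin : volume K ≠ ⊤)
    {a b : ℝ} (ha : 0 ≤ a) (hab : a ≤ b) :
    volume (cthickening b K \ cthickening a K) ≤
      ENNReal.ofReal ((1 + b) ^ d - (1 + a) ^ d) * volume K := by
  have h1a : (0:ℝ) < 1 + a := by linarith
  have hVa : volume (cthickening a K) ≠ ⊤ := by
    refine ne_top_of_le_ne_top ?_ (vol_cthick_le hKcl hKne hKconv hK1 ha)
    exact ENNReal.mul_ne_top ENNReal.ofReal_ne_top hKfin
  have hdiff : volume (cthickening b K \ cthickening a K) =
      volume (cthickening b K) - volume (cthickening a K) :=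
    measure_diff (cthickening_mono hab K) isClosed_cthickening.measurableSet.nullMeasurableSet hVa
  rw [hdiff]
  set r : ℝ := ((1 + b) / (1 + a)) ^ d with hr
  have hr1 : (1:ℝ) ≤ r := by
    apply one_le_pow₀
    rw [le_div_iff₀ h1a]; linarith
  calc volume (cthickening b K) - volume (cthickening a K)
      ≤ ENNReal.ofReal r * volume (cthickening a K) - 1 * volume (cthickening a K) := by
        rw [one_mul]
        exact tsub_le_tsub_right (vol_cthick_ratio hKcl hKne hKconv hK1 ha hab) _
    _ = (ENNReal.ofReal r - 1) * volume (cthickening a K) := by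
        rw [ENNReal.sub_mul (fun _ _ => hVa)]
    _ = ENNReal.ofReal (r - 1) * volume (cthickening a K) := by
        rw [← ENNReal.ofReal_one, ← ENNReal.ofReal_sub _ zero_le_one]
    _ ≤ ENNReal.ofReal (r - 1) * (ENNReal.ofReal ((1 + a) ^ d) * volume K) := by
        exact mul_le_mul_right (vol_cthick_le hKcl hKne hKconv hK1 ha) _
    _ = ENNReal.ofReal ((r - 1) * (1 + a) ^ d) * volume K := by
        rw [← mul_assoc, ← ENNReal.ofReal_mul (by linarith)]
    _ = ENNReal.ofReal ((1 + b) ^ d - (1 + a) ^ d) * volume K := by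
        congr 1
        rw [hr, div_pow, sub_mul, one_mul, div_mul_cancel₀]
        positivity

lemma poly_integral {d : ℕ} (hd : 1 ≤ d) {a b : ℝ} (hab : a ≤ b) :
    ∫ t in Ioo a b, (d : ℝ) * (1 + t) ^ (d - 1) = (1 + b) ^ d - (1 + a) ^ d := by
  rw [← integral_Ioc_eq_integral_Ioo, ← intervalIntegral.integral_of_le hab,
    intervalIntegral.integral_const_mul]
  have hcomp := intervalIntegral.integral_comp_add_left (a := a) (b := b)
    (fun x => x ^ (d - 1)) 1
  rw [hcomp, integral_pow, Nat.sub_add_cancel hd]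
  have hd0 : (d : ℝ) ≠ 0 := Nat.cast_ne_zero.2 (by omega)
  field_simp
  rw [Nat.cast_sub hd, Nat.cast_one]; ring

lemma gauss_int {η : ℝ} (hη : 0 < η) (m c : ℝ) (hc : 0 ≤ c) :
    ∫⁻ t : ℝ, ENNReal.ofReal (c * Real.exp (-(t - m) ^ 2 / (2 * η))) =
      ENNReal.ofReal (c * Real.sqrt (2 * Real.pi * η)) := by
  have hrw : ∀ t : ℝ, c * Real.exp (-(t - m) ^ 2 / (2 * η)) =
      c * Real.exp (-(1 / (2 * η)) * (t - m) ^ 2) := by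
    intro t; congr 1; congr 1; field_simp
  simp_rw [hrw]
  have hint : Integrable (fun t : ℝ => c * Real.exp (-(1 / (2 * η)) * (t - m) ^ 2)) := by
    apply Integrable.const_mul
    exact (integrable_exp_neg_mul_sq (by positivity)).comp_sub_right m
  rw [← ofReal_integral_eq_lintegral_ofReal hint
    (Filter.Eventually.of_forall fun t => by positivity)]
  congr 1
  rw [MeasureTheory.integral_const_mul]
  rw [integral_sub_right_eq_self (μ := volume)
    (fun x => Real.exp (-(1 / (2 * η)) * x ^ 2)) m, integral_gaussian]
  congr 1
  rw [div_div_eq_mul_div, div_one]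
  ring_nf

theorem stmt_0 (d : ℕ) (hd : 1 ≤ d) (R η τ : ℝ) (hR : 1 < R) (hη : 0 < η) (hτ : 0 ≤ τ)
    (K : Set (EuclideanSpace ℝ (Fin d))) (hKne : K.Nonempty) (hKcl : IsClosed K)
    (hKconv : Convex ℝ K) (hK1 : closedBall (0 : EuclideanSpace ℝ (Fin d)) 1 ⊆ K)
    (hKR : K ⊆ closedBall (0 : EuclideanSpace ℝ (Fin d)) R) :
    ∫ y, Real.exp (-(infDist y K - τ) ^ 2 / (2 * η)) ≤
      (volume K).toReal *
        (Real.exp (η * d ^ 2 / 2 + τ * d) * Real.sqrt (2 * Real.pi * η * d ^ 2) +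
          Real.exp (-τ ^ 2 / (2 * η))) := by
  have hd0 : (0:ℝ) < d := by exact_mod_cast Nat.pos_of_ne_zero (by omega)
  have hKvol : volume K ≠ ⊤ := (lt_of_le_of_lt (measure_mono hKR) measure_closedBall_lt_top).ne
  have hKmeas : MeasurableSet K := hKcl.measurableSet
  set f : ℝ → ℝ := fun t => Real.exp (-(t - τ) ^ 2 / (2 * η)) with hf
  have hfc : Continuous f := by fun_prop
  have hδc : Continuous fun y : EuclideanSpace ℝ (Fin d) => infDist y K := continuous_infDist_pt K
  have hgc : Continuous fun y : EuclideanSpace ℝ (Fin d) => f (infDist y K) := hfc.comp hδc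
  set A : ℝ := Real.exp (η * d ^ 2 / 2 + τ * d) * Real.sqrt (2 * Real.pi * η * d ^ 2) with hA
  set B : ℝ := Real.exp (-τ ^ 2 / (2 * η)) with hB
  have hA0 : 0 ≤ A := by positivity
  have hB0 : 0 ≤ B := by positivity
  have h1 : ∫ y, Real.exp (-(infDist y K - τ) ^ 2 / (2 * η)) =
      (∫⁻ y, ENNReal.ofReal (f (infDist y K))).toReal := by
    rw [integral_eq_lintegral_of_nonneg_ae (Filter.Eventually.of_forall fun y => by positivity)
      hgc.aestronglyMeasurable]
  rw [h1]
  -- part over K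
  have hK_part : (∫⁻ y in K, ENNReal.ofReal (f (infDist y K))) = ENNReal.ofReal B * volume K := by
    have : EqOn (fun y => ENNReal.ofReal (f (infDist y K))) (fun _ => ENNReal.ofReal B) K := by
      intro y hy; dsimp only
      rw [hf, hB, infDist_zero_of_mem hy]
      norm_num
    rw [setLIntegral_congr_fun hKmeas this, setLIntegral_const]
  -- part over Kᶜ
  have hC_part : (∫⁻ y in Kᶜ, ENNReal.ofReal (f (infDist y K))) ≤ ENNReal.ofReal A * volume K := by
    rw [lintegral_eq_lintegral_meas_lt _ (Filter.Eventually.of_forall fun y => by positivity)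
      hgc.aemeasurable]
    set G : ℝ → ℝ → ENNReal := fun s t =>
      if s < f t then ENNReal.ofReal ((d:ℝ) * (1 + t) ^ (d - 1)) else 0 with hG
    have hGmeas : Measurable (Function.uncurry G) := by
      apply Measurable.ite
      · exact measurableSet_lt measurable_fst (hfc.comp continuous_snd).measurable
      · exact ENNReal.measurable_ofReal.comp (by fun_prop)
      · exact measurable_const
    have hGmeas2 : ∀ s, Measurable (G s) := fun s => hGmeas.comp (measurable_prodMk_left)
    -- inner s-integral
    have hinner : ∀ t : ℝ, (∫⁻ s in Ioi (0:ℝ), G s t) =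
        ENNReal.ofReal ((d:ℝ) * (1 + t) ^ (d - 1)) * ENNReal.ofReal (f t) := by
      intro t
      have hmk : ∀ s : ℝ, G s t =
          Set.indicator (Iio (f t)) (fun _ => ENNReal.ofReal ((d:ℝ) * (1 + t) ^ (d - 1))) s := by
        intro s
        rw [hG]
        simp [Set.indicator, mem_Iio]
      simp_rw [hmk]
      rw [lintegral_indicator measurableSet_Iio, Measure.restrict_restrict measurableSet_Iio,
        setLIntegral_const, Iio_inter_Ioi, Real.volume_Ioo]
      congr 2
      · simp
    -- per-s bound
    have hper : ∀ s ∈ Ioi (0:ℝ), (volume.restrict Kᶜ) {y | s < f (infDist y K)} ≤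
        volume K * ∫⁻ t in Ioi (0:ℝ), G s t := by
      intro s hs
      have hs0 : (0:ℝ) < s := hs
      have hsetm : MeasurableSet {y : EuclideanSpace ℝ (Fin d) | s < f (infDist y K)} :=
        measurableSet_lt measurable_const hgc.measurable
      rw [Measure.restrict_apply hsetm]
      by_cases hs1 : 1 ≤ s
      · have hempty : {y : EuclideanSpace ℝ (Fin d) | s < f (infDist y K)} ∩ Kᶜ = ∅ := by
          apply eq_empty_of_forall_notMem
          rintro y ⟨hy1, -⟩
          have : f (infDist y K) ≤ 1 := Real.exp_le_one_iff.2 (div_nonpos_of_nonpos_of_nonneg (neg_nonpos.2 (sq_nonneg _)) (by linarith))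
          exact absurd hy1 (by simp only [mem_setOf_eq]; linarith)
        rw [hempty, measure_empty]
        exact zero_le
      · push_neg at hs1
        have hlogpos : 0 < Real.log s⁻¹ :=
          Real.log_pos ((one_lt_inv_iff₀).2 ⟨hs0, hs1⟩)
        set L := Real.sqrt (2 * η * Real.log s⁻¹) with hL
        have hL0 : 0 ≤ L := Real.sqrt_nonneg _
        have hLsq : L ^ 2 = 2 * η * Real.log s⁻¹ := Real.sq_sqrt (by positivity)
        set a := max 0 (τ - L) with ha
        set b := τ + L with hb
        have ha0 : 0 ≤ a := le_max_left _ _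
        have hab : a ≤ b := max_le (by simp only [hb]; linarith) (by simp only [hb]; linarith)
        have hkey : ∀ u : ℝ, s < f u ↔ (u - τ) ^ 2 < 2 * η * Real.log s⁻¹ := by
          intro u
          rw [hf]
          rw [← Real.log_lt_iff_lt_exp hs0, Real.log_inv]
          rw [lt_div_iff₀ (by positivity : (0:ℝ) < 2 * η)]
          constructor <;> intro h <;> nlinarith
        have hsub1 : {y : EuclideanSpace ℝ (Fin d) | s < f (infDist y K)} ∩ Kᶜ ⊆
            cthickening b K \ cthickening a K := by
          rintro y ⟨hy1, hy2⟩
          have hya : |infDist y K - τ| < L := by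
            have h2 := (hkey _).1 hy1
            have h3 := Real.sqrt_lt_sqrt (sq_nonneg _) h2
            rwa [Real.sqrt_sq_eq_abs] at h3
          have habs := abs_lt.1 hya
          have hyδpos : 0 < infDist y K := (hKcl.notMem_iff_infDist_pos hKne).1 hy2
          constructor
          · exact (mem_cthick_iff hKne (by linarith : (0:ℝ) ≤ b) y).2 (by
              simp only [hb]; linarith)
          · intro hmem
            have h4 := (mem_cthick_iff hKne ha0 y).1 hmem
            have h5 : a < infDist y K := by
              rw [ha, max_lt_iff]
              exact ⟨hyδpos, by linarith⟩
            linarith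
        have hb1 := (measure_mono hsub1).trans
          (vol_annulus hKcl hKne hKconv hK1 hKvol ha0 hab)
        have hRHS : ENNReal.ofReal ((1 + b) ^ d - (1 + a) ^ d) ≤ ∫⁻ t in Ioi (0:ℝ), G s t := by
          have hIoosub : Ioo a b ⊆ Ioi (0:ℝ) := fun t ht => lt_of_le_of_lt ha0 ht.1
          have step1 : ENNReal.ofReal ((1 + b) ^ d - (1 + a) ^ d) =
              ∫⁻ t in Ioo a b, ENNReal.ofReal ((d:ℝ) * (1 + t) ^ (d - 1)) := by
            rw [← poly_integral hd hab, ofReal_integral_eq_lintegral_ofReal]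
            · exact (((continuous_const.mul ((continuous_const.add continuous_id).pow
                (d-1))).continuousOn).integrableOn_compact isCompact_Icc).mono_set
                Ioo_subset_Icc_self
            · refine (ae_restrict_iff' measurableSet_Ioo).2
                (Filter.Eventually.of_forall fun t ht => ?_)
              have : (0:ℝ) < 1 + t := by have := hIoosub ht; simp at this; linarith
              positivity
          have step2 : (∫⁻ t in Ioo a b, ENNReal.ofReal ((d:ℝ) * (1 + t) ^ (d - 1))) =
              ∫⁻ t in Ioo a b, G s t := by
            apply setLIntegral_congr_fun measurableSet_Ioo
            intro t ht
            have hcond : s < f t := by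
              apply (hkey t).2
              have h1' : τ - L < t := lt_of_le_of_lt (le_max_right 0 (τ - L)) ht.1
              have h2' : t < τ + L := ht.2
              have h3' : (t - τ) ^ 2 < L ^ 2 := sq_lt_sq' (by linarith) (by linarith)
              rwa [hLsq] at h3'
            simp only [hG, if_pos hcond]
          rw [step1, step2]
          exact lintegral_mono_set hIoosub
        calc volume ({y : EuclideanSpace ℝ (Fin d) | s < f (infDist y K)} ∩ Kᶜ)
            ≤ ENNReal.ofReal ((1 + b) ^ d - (1 + a) ^ d) * volume K := hb1
          _ ≤ (∫⁻ t in Ioi (0:ℝ), G s t) * volume K := mul_le_mul_left hRHS _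
          _ = volume K * ∫⁻ t in Ioi (0:ℝ), G s t := mul_comm _ _
    -- assemble complement bound
    have hApt : ∀ t ∈ Ioi (0:ℝ),
        ENNReal.ofReal ((d:ℝ) * (1 + t) ^ (d - 1)) * ENNReal.ofReal (f t) ≤
        ENNReal.ofReal ((d:ℝ) * Real.exp (τ * d + η * d ^ 2 / 2) *
          Real.exp (-(t - (τ + η * d)) ^ 2 / (2 * η))) := by
      intro t ht
      have ht0 : (0:ℝ) < t := ht
      rw [← ENNReal.ofReal_mul (by positivity)]
      apply ENNReal.ofReal_le_ofReal
      have hpow : (1 + t) ^ (d - 1) ≤ Real.exp (t * d) := by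
        calc (1 + t) ^ (d - 1) ≤ Real.exp t ^ (d - 1) := by
              apply pow_le_pow_left₀ (by linarith)
              linarith [Real.add_one_le_exp t]
          _ = Real.exp (t * (d - 1 : ℕ)) := by rw [← Real.exp_nat_mul]; ring_nf
          _ ≤ Real.exp (t * d) := by
              apply Real.exp_le_exp.2
              have : ((d - 1 : ℕ) : ℝ) ≤ (d : ℝ) := by
                exact_mod_cast Nat.cast_le.2 (Nat.sub_le d 1)
              nlinarith
      have hiden : Real.exp (t * d) * f t =
          Real.exp (τ * d + η * d ^ 2 / 2) * Real.exp (-(t - (τ + η * d)) ^ 2 / (2 * η)) := by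
        rw [hf, ← Real.exp_add, ← Real.exp_add]
        congr 1
        field_simp
        ring
      calc (d:ℝ) * (1 + t) ^ (d - 1) * f t ≤ (d:ℝ) * Real.exp (t * d) * f t := by
            have hft : 0 ≤ f t := by rw [hf]; positivity
            apply mul_le_mul_of_nonneg_right _ hft
            exact mul_le_mul_of_nonneg_left hpow hd0.le
        _ = (d:ℝ) * (Real.exp (t * d) * f t) := by ring
        _ = _ := by rw [hiden]; ring
    calc (∫⁻ s in Ioi (0:ℝ), (volume.restrict Kᶜ) {y | s < f (infDist y K)})
        ≤ ∫⁻ s in Ioi (0:ℝ), volume K * ∫⁻ t in Ioi (0:ℝ), G s t := by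
          apply setLIntegral_mono
          · exact (Measurable.lintegral_prod_right hGmeas).const_mul _
          · exact hper
      _ = volume K * ∫⁻ s in Ioi (0:ℝ), ∫⁻ t in Ioi (0:ℝ), G s t :=
          lintegral_const_mul' _ _ hKvol
      _ = volume K * ∫⁻ t in Ioi (0:ℝ), ∫⁻ s in Ioi (0:ℝ), G s t := by
          rw [lintegral_lintegral_swap hGmeas.aemeasurable]
      _ ≤ volume K * ∫⁻ t in Ioi (0:ℝ), ENNReal.ofReal ((d:ℝ) *
            Real.exp (τ * d + η * d ^ 2 / 2) * Real.exp (-(t - (τ + η * d)) ^ 2 / (2 * η))) := by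
          apply mul_le_mul_right
          apply setLIntegral_mono
          · exact ENNReal.measurable_ofReal.comp (by fun_prop)
          · intro t ht
            rw [hinner t]
            exact hApt t ht
      _ ≤ volume K * ENNReal.ofReal ((d:ℝ) * Real.exp (τ * d + η * d ^ 2 / 2) *
            Real.sqrt (2 * Real.pi * η)) := by
          apply mul_le_mul_right
          refine le_trans (setLIntegral_le_lintegral _ _) ?_
          rw [gauss_int hη (τ + η * d) _ (by positivity)]
      _ = ENNReal.ofReal A * volume K := by
          rw [mul_comm]
          congr 1
          rw [hA, Real.sqrt_mul (by positivity) ((d:ℝ)^2), Real.sqrt_sq hd0.le,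
            add_comm (η * d ^ 2 / 2)]
          ring
  -- final assembly
  have htot : (∫⁻ y, ENNReal.ofReal (f (infDist y K))) ≤
      ENNReal.ofReal B * volume K + ENNReal.ofReal A * volume K := by
    rw [← lintegral_add_compl (fun y => ENNReal.ofReal (f (infDist y K))) hKmeas]
    rw [hK_part]  -- careful: lintegral_add_compl: in form s + sᶜ
    exact add_le_add le_rfl hC_part
  have hfin : ENNReal.ofReal B * volume K + ENNReal.ofReal A * volume K ≠ ⊤ :=
    ENNReal.add_ne_top.2 ⟨ENNReal.mul_ne_top ENNReal.ofReal_ne_top hKvol,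
      ENNReal.mul_ne_top ENNReal.ofReal_ne_top hKvol⟩
  calc (∫⁻ y, ENNReal.ofReal (f (infDist y K))).toReal
      ≤ (ENNReal.ofReal B * volume K + ENNReal.ofReal A * volume K).toReal :=
        ENNReal.toReal_mono hfin htot
    _ = B * (volume K).toReal + A * (volume K).toReal := by
        rw [ENNReal.toReal_add (ENNReal.mul_ne_top ENNReal.ofReal_ne_top hKvol)
          (ENNReal.mul_ne_top ENNReal.ofReal_ne_top hKvol), ENNReal.toReal_mul,
          ENNReal.toReal_mul, ENNReal.toReal_ofReal hB0, ENNReal.toReal_ofReal hA0]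
    _ = (volume K).toReal * (A + B) := by ring
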